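/- Disjoint unions of paths are not (1,2)-Tverberg: let K be a finite 1-dimensional simplicial complex in ℝ^N whose underlying graph (vertices of K and edges of K) is a disjoint union of path graphs, i.e. it contains no cycle and every vertex lies in at most two edges. Then there exists a continuous map f : |K| → ℝ such that f(σ) ∩ f(τ) = ∅ for every pair of faces σ, τ of K with disjoint vertex sets. -/

import Mathlib

open Set

namespace TvAux

variable {α : Type*}

/-- Vertices reachable from a member of `s` stay in `s` when all edges touch only `s`. -/
lemma mem_of_reachable {G : SimpleGraph α} {s : Set α}
    (hedge : ∀ x y, G.Adj x y → x ∈ s) {u v : α}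
    (hu : u ∈ s) (h : G.Reachable u v) : v ∈ s := by
  obtain ⟨w⟩ := h
  induction w with
  | nil => exact hu
  | cons hadj p ih => exact ih (hedge _ _ hadj.symm)

/-- Discrete intermediate value theorem along walks for an integer labelling whose steps
along edges are `±1`. -/
lemma walk_ivt {G : SimpleGraph α} {s : Set α} (h : α → ℤ)
    (hedge : ∀ x y, G.Adj x y → x ∈ s)
    (hstep : ∀ x y, x ∈ s → y ∈ s → G.Adj x y → (h x = h y + 1 ∨ h y = h x + 1))
    {x y : α} (w : G.Walk x y) :
    ∀ (_ : x ∈ s) (γ : ℤ), h x ≤ γ → γ ≤ h y → ∃ z, G.Reachable x z ∧ h z = γ := by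
  induction w with
  | nil =>
      intro hx γ h1 h2
      exact ⟨_, SimpleGraph.Reachable.refl _, by omega⟩
  | @cons a b c hadj p ih =>
      intro hx γ h1 h2
      by_cases hγ : γ = h a
      · exact ⟨a, SimpleGraph.Reachable.refl a, hγ.symm⟩
      · have hb : b ∈ s := hedge _ _ hadj.symm
        have hstep' := hstep a b hx hb hadj
        have h1' : h b ≤ γ := by omega
        obtain ⟨z, hz, hzval⟩ := ih hb γ h1' h2
        exact ⟨z, (hadj.reachable).trans hz, hzval⟩

/-- An injective even labelling of a finite set. -/
lemma even_embed {s : Set α} (hs : s.Finite) :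
    ∃ h : α → ℤ, Set.InjOn h s ∧ ∀ x ∈ s, Even (h x) := by
  classical
  let F := hs.toFinset
  let e := F.equivFin
  refine ⟨fun x => if hx : x ∈ F then 2 * ((e ⟨x, hx⟩ : ℕ) : ℤ) else 0, ?_, ?_⟩
  · intro x hx y hy hxy
    have hx' : x ∈ F := hs.mem_toFinset.2 hx
    have hy' : y ∈ F := hs.mem_toFinset.2 hy
    simp only [dif_pos hx', dif_pos hy'] at hxy
    have : ((e ⟨x, hx'⟩ : ℕ) : ℤ) = ((e ⟨y, hy'⟩ : ℕ) : ℤ) := by omega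
    have : (e ⟨x, hx'⟩ : ℕ) = (e ⟨y, hy'⟩ : ℕ) := by exact_mod_cast this
    have := e.injective (Fin.val_injective this)
    exact congrArg Subtype.val this
  · intro x hx
    have hx' : x ∈ F := hs.mem_toFinset.2 hx
    simp only [dif_pos hx']
    exact ⟨(e ⟨x, hx'⟩ : ℕ), by ring⟩


lemma edgeSet_finite {G : SimpleGraph α} {s : Set α} (hs : s.Finite)
    (hedge : ∀ x y, G.Adj x y → x ∈ s) : G.edgeSet.Finite := by
  apply Set.Finite.subset ((hs.prod hs).image (fun p => s(p.1, p.2)))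
  intro e he
  induction e with
  | _ x y =>
      have hadj : G.Adj x y := (SimpleGraph.mem_edgeSet G).1 he
      exact ⟨(x, y), ⟨hedge _ _ hadj, hedge _ _ hadj.symm⟩, rfl⟩

lemma no_edge_case {s : Set α} (hs : s.Finite) (G : SimpleGraph α)
    (hE : ∀ x y, ¬ G.Adj x y) :
    ∃ h : α → ℤ, Set.InjOn h s ∧
      ∀ x y, x ∈ s → y ∈ s → (G.Adj x y ↔ (h x = h y + 1 ∨ h y = h x + 1)) := by
  obtain ⟨h, hinj, heven⟩ := even_embed hs
  refine ⟨h, hinj, fun x y hx hy => ?_⟩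
  simp only [hE x y, false_iff]
  obtain ⟨a, ha⟩ := heven x hx
  obtain ⟨b, hb⟩ := heven y hy
  omega

lemma path_embed {s : Set α} (hs : s.Finite) :
    ∀ (n : ℕ) (G : SimpleGraph α), (∀ x y, G.Adj x y → x ∈ s) → G.IsAcyclic →
      (∀ v, {w | G.Adj v w}.ncard ≤ 2) → G.edgeSet.ncard ≤ n →
      ∃ h : α → ℤ, Set.InjOn h s ∧
        ∀ x y, x ∈ s → y ∈ s → (G.Adj x y ↔ (h x = h y + 1 ∨ h y = h x + 1)) := by
  intro n
  induction n with
  | zero =>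
      intro G hedge hforest hdeg hcard
      refine no_edge_case hs G (fun x y hadj => ?_)
      have hE : G.edgeSet = ∅ := by
        have hfin := edgeSet_finite hs hedge
        rcases Set.eq_empty_or_nonempty G.edgeSet with h | h
        · exact h
        · exact absurd hcard (by have := (Set.ncard_pos hfin).2 h; omega)
      exact absurd ((SimpleGraph.mem_edgeSet G).2 hadj) (hE ▸ Set.notMem_empty _)
  | succ n ih =>
      intro G hedge hforest hdeg hcard
      classical
      by_cases hE : G.edgeSet = ∅
      · refine no_edge_case hs G (fun x y hadj => ?_)
        exact absurd ((SimpleGraph.mem_edgeSet G).2 hadj) (hE ▸ Set.notMem_empty _)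
      obtain ⟨e, he⟩ := Set.nonempty_iff_ne_empty.2 hE
      have hEfin := edgeSet_finite hs hedge
      induction e with
      | _ u v =>
      have huv : G.Adj u v := (SimpleGraph.mem_edgeSet G).1 he
      have hus : u ∈ s := hedge _ _ huv
      have hvs : v ∈ s := hedge _ _ huv.symm
      set G' := G.deleteEdges {s(u, v)} with hG'def
      have hG'le : G' ≤ G := SimpleGraph.deleteEdges_le _
      have hedge' : ∀ x y, G'.Adj x y → x ∈ s := fun x y hxy => hedge _ _ (hG'le hxy)
      have hforest' : G'.IsAcyclic := fun w c hc =>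
        hforest (c.mapLe hG'le) (hc.mapLe hG'le)
      have hnbfin : ∀ w : α, {z | G.Adj w z}.Finite :=
        fun w => hs.subset (fun z hz => hedge _ _ (SimpleGraph.Adj.symm hz))
      have hdeg' : ∀ w, {z | G'.Adj w z}.ncard ≤ 2 := fun w =>
        le_trans (Set.ncard_le_ncard (fun z hz => hG'le hz) (hnbfin w)) (hdeg w)
      have hcard' : G'.edgeSet.ncard ≤ n := by
        have h1 : G'.edgeSet = G.edgeSet \ {s(u, v)} := SimpleGraph.edgeSet_deleteEdges _
        have h2 : (G.edgeSet \ {s(u, v)}).ncard = G.edgeSet.ncard - 1 :=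
          Set.ncard_diff_singleton_of_mem he
        have h3 : 0 < G.edgeSet.ncard := (Set.ncard_pos hEfin).2 ⟨_, he⟩
        rw [h1, h2]
        omega
      obtain ⟨h, hinj, hiff⟩ := ih G' hedge' hforest' hdeg' hcard'
      -- `u` and `v` are not reachable in `G'` since `G` is acyclic
      have hnr : ¬ G'.Reachable u v := by
        have hb := (SimpleGraph.isAcyclic_iff_forall_adj_isBridge.mp hforest) huv
        exact SimpleGraph.isBridge_iff.mp hb
      set A : Set α := {x | G'.Reachable u x} with hAdef
      set C : Set α := {x | G'.Reachable v x} with hCdef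
      have huA : u ∈ A := SimpleGraph.Reachable.refl u
      have hvC : v ∈ C := SimpleGraph.Reachable.refl v
      have hAs : A ⊆ s := fun x hx => mem_of_reachable hedge' hus hx
      have hCs : C ⊆ s := fun x hx => mem_of_reachable hedge' hvs hx
      have hAC : ∀ x, x ∈ A → x ∉ C := fun x hxA hxC => hnr (hxA.trans hxC.symm)
      have huC : u ∉ C := hAC u huA
      have hvA : v ∉ A := fun hvA => hnr hvA
      have hstep' : ∀ x y, x ∈ s → y ∈ s → G'.Adj x y →
          (h x = h y + 1 ∨ h y = h x + 1) := fun x y hx hy hadj => (hiff x y hx hy).1 hadj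
      -- a free slot next to `u`
      have hslot : ∃ t : ℤ, (t = h u + 1 ∨ t = h u - 1) ∧ ∀ x ∈ s, h x ≠ t := by
        by_contra hcon
        push_neg at hcon
        obtain ⟨xp, hxps, hxpv⟩ := hcon (h u + 1) (Or.inl rfl)
        obtain ⟨xm, hxms, hxmv⟩ := hcon (h u - 1) (Or.inr rfl)
        have hadjp : G'.Adj u xp := (hiff u xp hus hxps).2 (Or.inr (by omega))
        have hadjm : G'.Adj u xm := (hiff u xm hus hxms).2 (Or.inl (by omega))
        have hpm : xp ≠ xm := fun hEq => by rw [hEq] at hxpv; omega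
        have hpv : xp ≠ v := fun hEq => hnr (hEq ▸ hadjp).reachable
        have hmv : xm ≠ v := fun hEq => hnr (hEq ▸ hadjm).reachable
        have hsub : ({xp, xm, v} : Set α) ⊆ {w | G.Adj u w} := by
          rintro z (rfl | rfl | rfl)
          · exact hG'le hadjp
          · exact hG'le hadjm
          · exact huv
        have h3 : ({xp, xm, v} : Set α).ncard = 3 := by
          rw [Set.ncard_insert_of_notMem (by simp [hpm, hpv]) (Set.toFinite _),
            Set.ncard_pair hmv]
        have := Set.ncard_le_ncard hsub (hnbfin u)
        rw [h3] at this
        have := hdeg u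
        omega
      obtain ⟨t, ht1, ht2⟩ := hslot
      obtain ⟨e1, he1, he2⟩ : ∃ e1 : ℤ, (e1 = 1 ∨ e1 = -1) ∧ t = h u + e1 :=
        ⟨t - h u, by omega, by ring⟩
      -- `v` is extreme in its component
      have hvext : (∀ x ∈ C, h x ≤ h v) ∨ (∀ x ∈ C, h v ≤ h x) := by
        by_contra hcon
        push_neg at hcon
        obtain ⟨⟨x, hxC, hx⟩, ⟨y, hyC, hy⟩⟩ := hcon
        obtain ⟨w1⟩ := hxC
        obtain ⟨z, hrz, hzval⟩ := walk_ivt h hedge' hstep' w1 hvs (h v + 1)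
          (by omega) (by omega)
        obtain ⟨w2⟩ := hyC.symm
        obtain ⟨z', hrz', hzval'⟩ := walk_ivt h hedge' hstep' w2 (hCs hyC) (h v - 1)
          (by omega) (by omega)
        have hzC : z ∈ C := hrz
        have hz'C : z' ∈ C := hyC.trans hrz'
        have hadjz : G'.Adj v z := (hiff v z hvs (hCs hzC)).2 (Or.inr (by omega))
        have hadjz' : G'.Adj v z' := (hiff v z' hvs (hCs hz'C)).2 (Or.inl (by omega))
        have hzz' : z ≠ z' := fun hEq => by rw [hEq] at hzval; omega
        have hzu : z ≠ u := fun hEq => huC (hEq ▸ hzC)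
        have hz'u : z' ≠ u := fun hEq => huC (hEq ▸ hz'C)
        have hsub : ({z, z', u} : Set α) ⊆ {w | G.Adj v w} := by
          rintro w (rfl | rfl | rfl)
          · exact hG'le hadjz
          · exact hG'le hadjz'
          · exact huv.symm
        have h3 : ({z, z', u} : Set α).ncard = 3 := by
          rw [Set.ncard_insert_of_notMem (by simp [hzz', hzu]) (Set.toFinite _),
            Set.ncard_pair hz'u]
        have := Set.ncard_le_ncard hsub (hnbfin v)
        rw [h3] at this
        have := hdeg v
        omega
      obtain ⟨d, hd1, hd2⟩ : ∃ d : ℤ, (d = 1 ∨ d = -1) ∧ ∀ x ∈ C, 0 ≤ d * (h x - h v) := by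
        rcases hvext with hle | hge
        · exact ⟨-1, Or.inr rfl, fun x hx => by have := hle x hx; omega⟩
        · exact ⟨1, Or.inl rfl, fun x hx => by have := hge x hx; omega⟩
      -- the component of `u` lies on the other side of the free slot
      have hAside : ∀ a ∈ A, e1 * (h a - h u) ≤ 0 := by
        intro a ha
        by_contra hcon
        push_neg at hcon
        rcases he1 with rfl | rfl
        · obtain ⟨w1⟩ := ha
          obtain ⟨z, hrz, hzval⟩ := walk_ivt h hedge' hstep' w1 hus t
            (by omega) (by omega)
          exact ht2 z (mem_of_reachable hedge' hus hrz) hzval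
        · obtain ⟨w1⟩ := (ha : G'.Reachable u a).symm
          obtain ⟨z, hrz, hzval⟩ := walk_ivt h hedge' hstep' w1 (hAs ha) t
            (by omega) (by omega)
          exact ht2 z (mem_of_reachable hedge' (hAs ha) hrz) hzval
      -- global bound
      obtain ⟨M, hM0, hM⟩ : ∃ M : ℤ, 0 ≤ M ∧ ∀ x ∈ s, |h x| ≤ M := by
        refine ⟨((hs.toFinset.sup fun x => (h x).natAbs : ℕ) : ℤ), Int.ofNat_nonneg _, ?_⟩
        intro x hx
        rw [Int.abs_eq_natAbs]
        exact_mod_cast Finset.le_sup (f := fun x => (h x).natAbs) (hs.mem_toFinset.2 hx)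
      -- the new labelling
      set h2 : α → ℤ := fun x =>
        if x ∈ C then t + e1 * (d * (h x - h v))
        else if x ∈ A then h x else h x + (6 * M + 6) with hh2def
      have hC2 : ∀ x ∈ C, h2 x = t + e1 * (d * (h x - h v)) := fun x hx => if_pos hx
      have hA2 : ∀ x ∈ A, h2 x = h x := fun x hx => by
        simp only [hh2def, if_neg (hAC x hx), if_pos hx]
      have hO2 : ∀ x, x ∉ A → x ∉ C → h2 x = h x + (6 * M + 6) := fun x hxA hxC => by
        simp only [hh2def, if_neg hxC, if_neg hxA]

      have hM' : ∀ x ∈ s, -M ≤ h x ∧ h x ≤ M := fun x hx => abs_le.1 (hM x hx)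
      -- adjacency in `G` versus `G'`
      have hGiff : ∀ x y, G.Adj x y ↔ (G'.Adj x y ∨ (x = u ∧ y = v) ∨ (x = v ∧ y = u)) := by
        intro x y
        constructor
        · intro hxy
          by_cases hmem : s(x, y) = s(u, v)
          · exact Or.inr (Sym2.eq_iff.mp hmem)
          · exact Or.inl (SimpleGraph.deleteEdges_adj.2 ⟨hxy, by simpa using hmem⟩)
        · rintro (h' | ⟨rfl, rfl⟩ | ⟨rfl, rfl⟩)
          · exact hG'le h'
          · exact huv
          · exact huv.symm
      have hAcl : ∀ x y, x ∈ A → G'.Adj x y → y ∈ A := fun x y hx hadj =>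
        hx.trans hadj.reachable
      have hCcl : ∀ x y, x ∈ C → G'.Adj x y → y ∈ C := fun x y hx hadj =>
        hx.trans hadj.reachable
      -- value ranges
      have hCrange : ∀ x ∈ C, -(3*M) - 1 ≤ h2 x ∧ h2 x ≤ 3*M + 1 := by
        intro x hx
        have f2 := hd2 x hx
        have b1 := hM' x (hCs hx)
        have b2 := hM' v hvs
        have b3 := hM' u hus
        rw [hC2 x hx, he2]
        rcases he1 with rfl | rfl <;> rcases hd1 with rfl | rfl <;> omega
      have hArange : ∀ x ∈ A, -M ≤ h2 x ∧ h2 x ≤ M := by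
        intro x hx
        rw [hA2 x hx]
        exact hM' x (hAs hx)
      have hOrange : ∀ x ∈ s, x ∉ A → x ∉ C → 5*M + 6 ≤ h2 x ∧ h2 x ≤ 7*M + 6 := by
        intro x hx hxA hxC
        have b1 := hM' x hx
        rw [hO2 x hxA hxC]
        omega
      -- within `C` the labelling is a rigid motion
      have hCC : ∀ x ∈ C, ∀ y ∈ C,
          ((h2 x = h2 y + 1 ∨ h2 y = h2 x + 1) ↔ (h x = h y + 1 ∨ h y = h x + 1)) ∧
            (h2 x = h2 y ↔ h x = h y) := by
        intro x hx y hy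
        rw [hC2 x hx, hC2 y hy]
        rcases he1 with rfl | rfl <;> rcases hd1 with rfl | rfl <;>
          exact ⟨by omega, by omega⟩
      -- across `A` and `C`
      have hACne : ∀ x ∈ A, ∀ y ∈ C, h2 x ≠ h2 y := by
        intro x hx y hy hEq
        have f1 := hAside x hx
        have f2 := hd2 y hy
        rw [hC2 y hy, hA2 x hx, he2] at hEq
        rcases he1 with rfl | rfl <;> rcases hd1 with rfl | rfl <;> omega
      have hACiff : ∀ x ∈ A, ∀ y ∈ C,
          ((h2 x = h2 y + 1 ∨ h2 y = h2 x + 1) ↔ (x = u ∧ y = v)) := by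
        intro x hx y hy
        have f1 := hAside x hx
        have f2 := hd2 y hy
        constructor
        · intro hcons
          rw [hC2 y hy, hA2 x hx, he2] at hcons
          have hxy : h x = h u ∧ h y = h v := by
            rcases he1 with rfl | rfl <;> rcases hd1 with rfl | rfl <;> omega
          exact ⟨hinj (hAs hx) hus hxy.1, hinj (hCs hy) hvs hxy.2⟩
        · rintro ⟨rfl, rfl⟩
          rw [hC2 y hy, hA2 x hx, he2]
          rcases he1 with rfl | rfl <;> rcases hd1 with rfl | rfl <;> omega
      -- gap towards the shifted part
      have hgap : ∀ x ∈ s, ∀ y ∈ s, (x ∈ A ∨ x ∈ C) → y ∉ A → y ∉ C →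
          h2 x + 2 ≤ h2 y := by
        intro x hx y hy hxAC hyA hyC
        have hO := hOrange y hy hyA hyC
        rcases hxAC with hA | hC
        · have := hArange x hA
          omega
        · have := hCrange x hC
          omega
      refine ⟨h2, ?_, ?_⟩
      · -- injectivity
        intro x hx y hy hEq
        by_cases hxC : x ∈ C <;> by_cases hyC : y ∈ C
        · exact hinj (hCs hxC) (hCs hyC) (((hCC x hxC y hyC).2).1 hEq)
        · by_cases hyA : y ∈ A
          · exact absurd hEq.symm (hACne y hyA x hxC)
          · have := hgap x hx y hy (Or.inr hxC) hyA hyC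
            omega
        · by_cases hxA : x ∈ A
          · exact absurd hEq (hACne x hxA y hyC)
          · have := hgap y hy x hx (Or.inr hyC) hxA hxC
            omega
        · by_cases hxA : x ∈ A <;> by_cases hyA : y ∈ A
          · refine hinj (hAs hxA) (hAs hyA) ?_
            rwa [hA2 x hxA, hA2 y hyA] at hEq
          · have := hgap x hx y hy (Or.inl hxA) hyA hyC
            omega
          · have := hgap y hy x hx (Or.inl hyA) hxA hxC
            omega
          · refine hinj hx hy ?_
            rw [hO2 x hxA hxC, hO2 y hyA hyC] at hEq
            omega
      · -- the adjacency characterisation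
        intro x y hx hy
        by_cases hxC : x ∈ C <;> by_cases hyC : y ∈ C
        · -- both in C
          have hGxy : G.Adj x y ↔ G'.Adj x y := by
            rw [hGiff x y]
            constructor
            · rintro (h' | ⟨rfl, rfl⟩ | ⟨rfl, rfl⟩)
              · exact h'
              · exact absurd hxC huC
              · exact absurd hyC huC
            · exact Or.inl
          rw [hGxy, hiff x y hx hy]
          exact ((hCC x hxC y hyC).1).symm
        · by_cases hyA : y ∈ A
          · -- x ∈ C, y ∈ A
            have hGxy : G.Adj x y ↔ (x = v ∧ y = u) := by
              rw [hGiff x y]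
              constructor
              · rintro (h' | ⟨rfl, rfl⟩ | ⟨rfl, rfl⟩)
                · exact absurd (hCcl x y hxC h') (fun hc => hAC y hyA hc)
                · exact absurd hxC huC
                · exact ⟨rfl, rfl⟩
              · rintro ⟨rfl, rfl⟩
                exact Or.inr (Or.inr ⟨rfl, rfl⟩)
            have hkey := hACiff y hyA x hxC
            rw [hGxy]
            constructor
            · rintro ⟨h1, h2'⟩
              exact Or.symm (hkey.mpr ⟨h2', h1⟩)
            · intro hc
              obtain ⟨h1, h2'⟩ := hkey.mp (Or.symm hc)
              exact ⟨h2', h1⟩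
          · -- x ∈ C, y outside
            have hnadj : ¬ G.Adj x y := by
              rw [hGiff x y]
              rintro (h' | ⟨rfl, rfl⟩ | ⟨rfl, rfl⟩)
              · exact hyC (hCcl x y hxC h')
              · exact huC hxC
              · exact hyA huA
            have := hgap x hx y hy (Or.inr hxC) hyA hyC
            simp only [hnadj, false_iff]
            omega
        · by_cases hxA : x ∈ A
          · -- x ∈ A, y ∈ C
            have hGxy : G.Adj x y ↔ (x = u ∧ y = v) := by
              rw [hGiff x y]
              constructor
              · rintro (h' | ⟨rfl, rfl⟩ | ⟨rfl, rfl⟩)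
                · exact absurd (hAcl x y hxA h') (fun hc => hAC y hc hyC)
                · exact ⟨rfl, rfl⟩
                · exact absurd hxA hvA
              · rintro ⟨rfl, rfl⟩
                exact Or.inr (Or.inl ⟨rfl, rfl⟩)
            rw [hGxy]
            exact (hACiff x hxA y hyC).symm
          · -- x outside, y ∈ C
            have hnadj : ¬ G.Adj x y := by
              rw [hGiff x y]
              rintro (h' | ⟨rfl, rfl⟩ | ⟨rfl, rfl⟩)
              · exact hxC (hCcl y x hyC h'.symm)
              · exact hxA huA
              · exact hxC hvC
            have := hgap y hy x hx (Or.inr hyC) hxA hxC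
            simp only [hnadj, false_iff]
            omega
        · by_cases hxA : x ∈ A <;> by_cases hyA : y ∈ A
          · -- both in A
            have hGxy : G.Adj x y ↔ G'.Adj x y := by
              rw [hGiff x y]
              constructor
              · rintro (h' | ⟨rfl, rfl⟩ | ⟨rfl, rfl⟩)
                · exact h'
                · exact absurd hyA hvA
                · exact absurd hxA hvA
              · exact Or.inl
            rw [hGxy, hiff x y hx hy, hA2 x hxA, hA2 y hyA]
          · -- x ∈ A, y outside
            have hnadj : ¬ G.Adj x y := by
              rw [hGiff x y]
              rintro (h' | ⟨rfl, rfl⟩ | ⟨rfl, rfl⟩)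
              · exact hyA (hAcl x y hxA h')
              · exact hyC hvC
              · exact hyA huA
            have := hgap x hx y hy (Or.inl hxA) hyA hyC
            simp only [hnadj, false_iff]
            omega
          · -- y ∈ A, x outside
            have hnadj : ¬ G.Adj x y := by
              rw [hGiff x y]
              rintro (h' | ⟨rfl, rfl⟩ | ⟨rfl, rfl⟩)
              · exact hxA (hAcl y x hyA h'.symm)
              · exact hxA huA
              · exact hxC hvC
            have := hgap y hy x hx (Or.inl hyA) hxA hxC
            simp only [hnadj, false_iff]
            omega
          · -- both outside
            have hGxy : G.Adj x y ↔ G'.Adj x y := by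
              rw [hGiff x y]
              constructor
              · rintro (h' | ⟨rfl, rfl⟩ | ⟨rfl, rfl⟩)
                · exact h'
                · exact absurd huA hxA
                · exact absurd hvC hxC
              · exact Or.inl
            rw [hGxy, hiff x y hx hy, hO2 x hxA hxC, hO2 y hyA hyC]
            omega



end TvAux

open Geometry


theorem disjoint_union_of_paths_not_tverberg {N : ℕ}
    (K : SimplicialComplex ℝ (Fin N → ℝ)) (hfin : K.faces.Finite)
    (hdim : ∀ σ ∈ K.faces, σ.card ≤ 2)
    (G : SimpleGraph (Fin N → ℝ))
    (hG : ∀ x y, G.Adj x y ↔ x ≠ y ∧ ({x, y} : Finset (Fin N → ℝ)) ∈ K.faces)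
    (hforest : G.IsAcyclic)
    (hdeg : ∀ v, {w | G.Adj v w}.ncard ≤ 2) :
    ∃ f : C(↥K.space, ℝ), ∀ σ ∈ K.faces, ∀ τ ∈ K.faces, Disjoint σ τ →
      (f '' {x : ↥K.space | (x : Fin N → ℝ) ∈ convexHull ℝ (σ : Set (Fin N → ℝ))} ∩
        f '' {x : ↥K.space | (x : Fin N → ℝ) ∈ convexHull ℝ (τ : Set (Fin N → ℝ))}) = ∅ := by
  classical
  -- the vertex set
  have hVfin : K.vertices.Finite := by
    have : K.vertices = (fun x => ({x} : Finset (Fin N → ℝ))) ⁻¹' K.faces := rfl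
    rw [this]
    exact hfin.preimage (fun x _ y _ hEq => by simpa using hEq)
  have hedge : ∀ x y, G.Adj x y → x ∈ K.vertices := by
    intro x y hxy
    obtain ⟨hne, hface⟩ := (hG x y).1 hxy
    exact K.down_closed hface (by simp) (by simp)
  obtain ⟨h, hinj, hiff⟩ :=
    TvAux.path_embed hVfin G.edgeSet.ncard G hedge hforest hdeg le_rfl
  set g : (Fin N → ℝ) → ℝ := fun x => (h x : ℝ) with hgdef
  set c : (Fin N → ℝ) → (Fin N → ℝ) → (Fin N → ℝ) → ℝ := fun a b x =>
    g a + (g b - g a) *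
      ((∑ i, (x i - a i) * (b i - a i)) / (∑ i, (b i - a i) * (b i - a i))) with hcdef
  have hD : ∀ a b : Fin N → ℝ, a ≠ b → (0:ℝ) < ∑ i, (b i - a i) * (b i - a i) := by
    intro a b hne
    have hne' : ∃ i, b i - a i ≠ 0 := by
      by_contra hcon
      push_neg at hcon
      exact hne (funext fun i => by have := hcon i; linarith)
    obtain ⟨i, hi⟩ := hne'
    exact Finset.sum_pos' (fun j _ => mul_self_nonneg _)
      ⟨i, Finset.mem_univ i, mul_self_pos.2 hi⟩
  have hc_left : ∀ a b, c a b a = g a := by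
    intro a b
    simp only [hcdef]
    have : (∑ i, (a i - a i) * (b i - a i)) = 0 := by simp
    rw [this, zero_div, mul_zero, add_zero]
  have hc_right : ∀ a b, c a b b = g b := by
    intro a b
    by_cases hab : a = b
    · rw [← hab]; rw [hc_left, hab]
    · simp only [hcdef]
      rw [div_self (ne_of_gt (hD a b hab))]
      ring
  have hc_seg : ∀ (a b : Fin N → ℝ) (p q : ℝ), a ≠ b → 0 ≤ p → 0 ≤ q → p + q = 1 →
      c a b (p • a + q • b) = p * g a + q * g b := by
    intro a b p q hab hp hq hpq
    simp only [hcdef]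
    have hp' : p = 1 - q := by linarith
    have hnum : (∑ i, ((p • a + q • b) i - a i) * (b i - a i)) =
        q * ∑ i, (b i - a i) * (b i - a i) := by
      rw [Finset.mul_sum]
      refine Finset.sum_congr rfl (fun i _ => ?_)
      simp only [Pi.add_apply, Pi.smul_apply, smul_eq_mul]
      rw [hp']
      ring
    rw [hnum, mul_div_assoc, div_self (ne_of_gt (hD a b hab)), mul_one, hp']
    ring
  -- choose the (at most two) endpoints of each face
  have hpair : ∀ σ ∈ K.faces, ∃ a b : Fin N → ℝ, σ = {a, b} := by
    intro σ hσ
    have hne : σ.Nonempty := Finset.nonempty_iff_ne_empty.2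
      (fun hEq => K.empty_notMem (hEq ▸ hσ))
    have hcard2 := hdim σ hσ
    have hcard : σ.card = 1 ∨ σ.card = 2 := by
      have := Finset.card_pos.2 hne
      omega
    rcases hcard with h1 | h2
    · obtain ⟨a, rfl⟩ := Finset.card_eq_one.1 h1
      exact ⟨a, a, by ext z; simp⟩
    · obtain ⟨a, b, _, rfl⟩ := Finset.card_eq_two.1 h2
      exact ⟨a, b, rfl⟩
  choose! pa pb hpab using hpair
  have hpamem : ∀ σ ∈ K.faces, pa σ ∈ σ := by
    intro σ hσ
    have := Finset.mem_insert_self (pa σ) {pb σ}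
    rw [← hpab σ hσ] at this
    exact this
  have hpbmem : ∀ σ ∈ K.faces, pb σ ∈ σ := by
    intro σ hσ
    have : pb σ ∈ ({pa σ, pb σ} : Finset (Fin N → ℝ)) := by simp
    rw [← hpab σ hσ] at this
    exact this
  have hfv : ∀ σ ∈ K.faces, ∀ w ∈ σ, w ∈ K.vertices := by
    intro σ hσ w hw
    exact K.down_closed hσ (Finset.singleton_subset_iff.2 hw) (by simp)
  -- value of `c` at a vertex of its face
  have hcv : ∀ σ ∈ K.faces, ∀ w ∈ σ, c (pa σ) (pb σ) w = g w := by
    intro σ hσ w hw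
    rw [hpab σ hσ] at hw
    rcases Finset.mem_insert.1 hw with rfl | hw'
    · exact hc_left _ _
    · rw [Finset.mem_singleton.1 hw']
      exact hc_right _ _
  -- consistency on overlaps
  have hcons : ∀ σ ∈ K.faces, ∀ τ ∈ K.faces, ∀ x : Fin N → ℝ,
      x ∈ convexHull ℝ (σ : Set (Fin N → ℝ)) → x ∈ convexHull ℝ (τ : Set (Fin N → ℝ)) →
      c (pa σ) (pb σ) x = c (pa τ) (pb τ) x := by
    intro σ hσ τ hτ x hxσ hxτ
    have hxi := K.inter_subset_convexHull hσ hτ ⟨hxσ, hxτ⟩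
    rw [show ((σ : Set (Fin N → ℝ)) ∩ (τ : Set (Fin N → ℝ))) = ((σ ∩ τ : Finset (Fin N → ℝ)) : Set (Fin N → ℝ)) from (Finset.coe_inter σ τ).symm] at hxi
    have hne : (σ ∩ τ).Nonempty := by
      by_contra hcon
      rw [Finset.not_nonempty_iff_eq_empty] at hcon
      rw [hcon] at hxi
      simp at hxi
    have hcard : (σ ∩ τ).card = 1 ∨ 2 ≤ (σ ∩ τ).card := by
      have := Finset.card_pos.2 hne
      omega
    rcases hcard with h1 | h2
    · obtain ⟨w, hw⟩ := Finset.card_eq_one.1 h1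
      rw [hw] at hxi
      have hxw : x = w := by simpa using hxi
      subst hxw
      have hwστ : x ∈ σ ∩ τ := by rw [hw]; exact Finset.mem_singleton_self x
      rw [hcv σ hσ x (Finset.mem_of_mem_inter_left hwστ),
        hcv τ hτ x (Finset.mem_of_mem_inter_right hwστ)]
    · have hστ : σ = τ := by
        have e1 : σ ∩ τ = σ := Finset.eq_of_subset_of_card_le Finset.inter_subset_left
          (by have := hdim σ hσ; omega)
        have e2 : σ ∩ τ = τ := Finset.eq_of_subset_of_card_le Finset.inter_subset_right
          (by have := hdim τ hτ; omega)
        rw [← e1, e2]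
      rw [hστ]
  -- select a face for every point of the space
  have hx_face : ∀ x : ↥K.space, ∃ σ, σ ∈ K.faces ∧
      (x : Fin N → ℝ) ∈ convexHull ℝ (σ : Set (Fin N → ℝ)) := by
    intro x
    have := (SimplicialComplex.mem_space_iff).1 x.2
    simpa using this
  choose Φ hΦf hΦx using hx_face
  have hccont : ∀ a b : Fin N → ℝ, Continuous (c a b) := by
    intro a b
    simp only [hcdef]
    refine Continuous.add continuous_const
      (Continuous.mul continuous_const (Continuous.div_const ?_ _))
    exact continuous_finset_sum _ fun i _ =>
      ((continuous_apply i).sub continuous_const).mul continuous_const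
  have hfcont : Continuous (fun x : ↥K.space => c (pa (Φ x)) (pb (Φ x)) (x : Fin N → ℝ)) := by
    haveI : Finite {σ // σ ∈ K.faces} := hfin
    apply LocallyFinite.continuous
      (f := fun σ : {σ // σ ∈ K.faces} =>
        {x : ↥K.space | (x : Fin N → ℝ) ∈ convexHull ℝ ((σ.1 : Finset (Fin N → ℝ)) : Set (Fin N → ℝ))})
    · exact locallyFinite_of_finite _
    · apply Set.eq_univ_of_forall
      intro x
      exact Set.mem_iUnion.2 ⟨⟨Φ x, hΦf x⟩, hΦx x⟩
    · intro σ
      exact ((Set.Finite.isClosed_convexHull (𝕜 := ℝ) (Finset.finite_toSet _)).preimage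
        continuous_subtype_val)
    · intro σ
      refine ContinuousOn.congr
        (((hccont (pa σ.1) (pb σ.1)).comp continuous_subtype_val).continuousOn) ?_
      intro x hx
      exact hcons (Φ x) (hΦf x) σ.1 σ.2 _ (hΦx x) hx
  -- the range of `c` on the hull of a face
  have hrange : ∀ ρ ∈ K.faces, ∀ x : Fin N → ℝ, x ∈ convexHull ℝ (ρ : Set (Fin N → ℝ)) →
      min (g (pa ρ)) (g (pb ρ)) ≤ c (pa ρ) (pb ρ) x ∧
        c (pa ρ) (pb ρ) x ≤ max (g (pa ρ)) (g (pb ρ)) := by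
    intro ρ hρ x hx
    set a := pa ρ with hadef
    set b := pb ρ with hbdef
    have hρab : ρ = {a, b} := by
      rw [hadef, hbdef]
      exact hpab ρ hρ
    by_cases hab : a = b
    · have hcoe : (ρ : Set (Fin N → ℝ)) = {b} := by
        rw [hρab, hab]
        simp
      rw [hcoe, convexHull_singleton] at hx
      rw [hx, hab, hc_right]
      simp [hab]
    · have hcoe : (ρ : Set (Fin N → ℝ)) = {a, b} := by
        rw [hρab]
        simp
      rw [hcoe, convexHull_pair] at hx
      obtain ⟨p, q, hp, hq, hpq, rfl⟩ := hx
      rw [hc_seg a b p q hab hp hq hpq]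
      have h1 : min (g a) (g b) ≤ g a := min_le_left _ _
      have h2 : min (g a) (g b) ≤ g b := min_le_right _ _
      have h3 : g a ≤ max (g a) (g b) := le_max_left _ _
      have h4 : g b ≤ max (g a) (g b) := le_max_right _ _
      constructor
      · calc min (g a) (g b) = (p + q) * min (g a) (g b) := by rw [hpq, one_mul]
          _ = p * min (g a) (g b) + q * min (g a) (g b) := by ring
          _ ≤ p * g a + q * g b :=
              add_le_add (mul_le_mul_of_nonneg_left h1 hp) (mul_le_mul_of_nonneg_left h2 hq)
      · calc p * g a + q * g b ≤ p * max (g a) (g b) + q * max (g a) (g b) :=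
              add_le_add (mul_le_mul_of_nonneg_left h3 hp) (mul_le_mul_of_nonneg_left h4 hq)
          _ = (p + q) * max (g a) (g b) := by ring
          _ = max (g a) (g b) := by rw [hpq, one_mul]
  -- the map
  refine ⟨⟨fun x : ↥K.space => c (pa (Φ x)) (pb (Φ x)) (x : Fin N → ℝ), hfcont⟩, ?_⟩
  intro σ hσ τ hτ hdisj
  rw [Set.eq_empty_iff_forall_notMem]
  rintro y ⟨⟨x1, hx1, hy1⟩, ⟨x2, hx2, hy2⟩⟩
  simp only [ContinuousMap.coe_mk, Set.mem_setOf_eq] at hx1 hx2 hy1 hy2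
  have hv1 : y = c (pa σ) (pb σ) (x1 : Fin N → ℝ) := by
    rw [← hy1]
    exact hcons (Φ x1) (hΦf x1) σ hσ _ (hΦx x1) hx1
  have hv2 : y = c (pa τ) (pb τ) (x2 : Fin N → ℝ) := by
    rw [← hy2]
    exact hcons (Φ x2) (hΦf x2) τ hτ _ (hΦx x2) hx2
  have hr1 := hrange σ hσ _ hx1
  have hr2 := hrange τ hτ _ hx2
  rw [← hv1] at hr1
  rw [← hv2] at hr2
  -- integer endpoints
  set A1 : ℤ := min (h (pa σ)) (h (pb σ)) with hA1
  set B1 : ℤ := max (h (pa σ)) (h (pb σ)) with hB1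
  set A2 : ℤ := min (h (pa τ)) (h (pb τ)) with hA2
  set B2 : ℤ := max (h (pa τ)) (h (pb τ)) with hB2
  have hgmin : ∀ w1 w2 : Fin N → ℝ, min (g w1) (g w2) = ((min (h w1) (h w2) : ℤ) : ℝ) := by
    intro w1 w2
    simp only [hgdef]
    rw [Int.cast_min]
  have hgmax : ∀ w1 w2 : Fin N → ℝ, max (g w1) (g w2) = ((max (h w1) (h w2) : ℤ) : ℝ) := by
    intro w1 w2
    simp only [hgdef]
    rw [Int.cast_max]
  have hcast1 : (A1 : ℝ) ≤ y ∧ y ≤ (B1 : ℝ) := by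
    constructor
    · rw [hA1, ← hgmin]
      exact hr1.1
    · rw [hB1, ← hgmax]
      exact hr1.2
  have hcast2 : (A2 : ℝ) ≤ y ∧ y ≤ (B2 : ℝ) := by
    constructor
    · rw [hA2, ← hgmin]
      exact hr2.1
    · rw [hB2, ← hgmax]
      exact hr2.2
  have hle1 : A1 ≤ B2 := by
    have : (A1 : ℝ) ≤ (B2 : ℝ) := le_trans hcast1.1 hcast2.2
    exact_mod_cast this
  have hle2 : A2 ≤ B1 := by
    have : (A2 : ℝ) ≤ (B1 : ℝ) := le_trans hcast2.1 hcast1.2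
    exact_mod_cast this
  -- each face spans an interval of length at most one
  have hlen : ∀ ρ ∈ K.faces, max (h (pa ρ)) (h (pb ρ)) ≤ min (h (pa ρ)) (h (pb ρ)) + 1 := by
    intro ρ hρ
    by_cases hab : pa ρ = pb ρ
    · rw [hab]
      omega
    · have hadj : G.Adj (pa ρ) (pb ρ) := (hG _ _).2 ⟨hab, by rw [← hpab ρ hρ]; exact hρ⟩
      have := (hiff _ _ (hfv ρ hρ _ (hpamem ρ hρ)) (hfv ρ hρ _ (hpbmem ρ hρ))).1 hadj
      omega
  have hlen1 := hlen σ hσ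
  have hlen2 := hlen τ hτ
  -- cross endpoints are distinct
  have hneq : ∀ w1 ∈ σ, ∀ w2 ∈ τ, h w1 ≠ h w2 := by
    intro w1 hw1 w2 hw2 hEq
    have hEq' : w1 = w2 := hinj (hfv σ hσ w1 hw1) (hfv τ hτ w2 hw2) hEq
    exact (Finset.disjoint_left.1 hdisj hw1) (hEq' ▸ hw2)
  have hxdist : ∀ z1 : ℤ, (z1 = h (pa σ) ∨ z1 = h (pb σ)) →
      ∀ z2 : ℤ, (z2 = h (pa τ) ∨ z2 = h (pb τ)) → z1 ≠ z2 := by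
    rintro z1 (rfl | rfl) z2 (rfl | rfl)
    · exact hneq _ (hpamem σ hσ) _ (hpamem τ hτ)
    · exact hneq _ (hpamem σ hσ) _ (hpbmem τ hτ)
    · exact hneq _ (hpbmem σ hσ) _ (hpamem τ hτ)
    · exact hneq _ (hpbmem σ hσ) _ (hpbmem τ hτ)
  have d1 : A1 ≠ A2 := hxdist A1 (min_choice _ _) A2 (min_choice _ _)
  have d2 : A1 ≠ B2 := hxdist A1 (min_choice _ _) B2 (max_choice _ _)
  have d3 : B1 ≠ A2 := hxdist B1 (max_choice _ _) A2 (min_choice _ _)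
  have d4 : B1 ≠ B2 := hxdist B1 (max_choice _ _) B2 (max_choice _ _)
  have hm1 : A1 ≤ B1 := min_le_max
  have hm2 : A2 ≤ B2 := min_le_max
  omega
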